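/- Let Z₁,…,Zₙ be (not necessarily independent) random variables over finite alphabet Z such that H(Z_i | Z₁=z₁,…,Z_{i−1}=z_{i−1}) ≥ h for all i and all histories z₁,…,z_{i−1}. Then for any 0 < λ < 1/2, the smooth min-entropy satisfies H_min^ε(Z₁…Zₙ) ≥ (h − 2λ)n, with ε = exp(−λ²n / (32·(log₂(|Z|/λ))²)). -/

import Mathlib

open scoped Classical

variable {Z : Type*} [Fintype Z] [Nonempty Z]

/-- Generalized trace distance. -/
noncomputable def GTD {W : Type*} [Fintype W] (P Q : W → ℝ) : ℝ :=
  (1/2) * ∑ w, |P w - Q w| + (1/2) * |∑ w, (P w - Q w)|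

/-- Subnormalized distribution. -/
def IsSubDist {W : Type*} [Fintype W] (P : W → ℝ) : Prop := (∀ w, 0 ≤ P w) ∧ ∑ w, P w ≤ 1

/-- Probability that the first `i` coordinates agree with `z`. -/
noncomputable def prefProb {n : ℕ} (P : (Fin n → Z) → ℝ) (i : ℕ) (z : Fin n → Z) : ℝ :=
  ∑ w, if ∀ j : Fin n, (j : ℕ) < i → w j = z j then P w else 0

/-- Conditional probability `Pr[Z_i = a | Z_1 … Z_{i-1} = z_1 … z_{i-1}]`. -/
noncomputable def condProb {n : ℕ} (P : (Fin n → Z) → ℝ) (i : Fin n) (z : Fin n → Z)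
    (a : Z) : ℝ :=
  prefProb P (i + 1) (Function.update z i a) / prefProb P i z

/-- Conditional Shannon entropy (bits) of `Z_i` given the history `z`. -/
noncomputable def condEnt {n : ℕ} (P : (Fin n → Z) → ℝ) (i : Fin n) (z : Fin n → Z) : ℝ :=
  -∑ a : Z, condProb P i z a * Real.logb 2 (condProb P i z a)

variable {n : ℕ} {P : (Fin n → Z) → ℝ}

lemma prefProb_nonneg (hP : ∀ w, 0 ≤ P w) (i : ℕ) (z : Fin n → Z) : 0 ≤ prefProb P i z := by
  apply Finset.sum_nonneg; intro w _
  by_cases hc : ∀ j : Fin n, (j : ℕ) < i → w j = z j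
  · rw [if_pos hc]; exact hP w
  · rw [if_neg hc]

lemma prefProb_zero (z : Fin n → Z) : prefProb P 0 z = ∑ w, P w := by
  unfold prefProb; apply Finset.sum_congr rfl; intro w _; rw [if_pos]; intro j hj; omega

lemma self_le_prefProb (hP : ∀ w, 0 ≤ P w) (i : ℕ) (z : Fin n → Z) : P z ≤ prefProb P i z := by
  unfold prefProb
  have := Finset.single_le_sum (f := fun w => if ∀ j : Fin n, (j : ℕ) < i → w j = z j then P w else 0)
    (fun w _ => by
      show (0:ℝ) ≤ if ∀ j : Fin n, (j : ℕ) < i → w j = z j then P w else 0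
      by_cases hc : ∀ j : Fin n, (j : ℕ) < i → w j = z j
      · rw [if_pos hc]; exact hP w
      · rw [if_neg hc]) (Finset.mem_univ z)
  simpa using this

lemma prefProb_last (z : Fin n → Z) : prefProb P n z = P z := by
  unfold prefProb
  rw [Finset.sum_eq_single z]
  · rw [if_pos]; intro j hj; rfl
  · intro w _ hw
    rw [if_neg]; intro hc; apply hw; funext j; exact hc j j.isLt
  · simp

lemma prefProb_congr {i : ℕ} {z₁ z₂ : Fin n → Z}
    (hz : ∀ j : Fin n, (j : ℕ) < i → z₁ j = z₂ j) : prefProb P i z₁ = prefProb P i z₂ := by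
  unfold prefProb
  apply Finset.sum_congr rfl; intro w _
  congr 1
  simp only [eq_iff_iff]
  constructor
  · intro hc j hj; rw [hc j hj, hz j hj]
  · intro hc j hj; rw [hc j hj, hz j hj]

lemma prefProb_succ_sum (i : Fin n) (z : Fin n → Z) :
    ∑ a : Z, prefProb P ((i : ℕ) + 1) (Function.update z i a) = prefProb P i z := by
  unfold prefProb
  rw [Finset.sum_comm]
  apply Finset.sum_congr rfl; intro w _
  by_cases hw : ∀ j : Fin n, (j : ℕ) < i → w j = z j
  · rw [if_pos hw, Finset.sum_eq_single (w i)]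
    · rw [if_pos]
      intro j hj
      rcases eq_or_ne j i with rfl | hne
      · simp
      · rw [Function.update_of_ne hne]
        have hji : (j : ℕ) ≠ (i : ℕ) := fun hv => hne (Fin.ext hv)
        exact hw j (by omega)
    · intro a _ ha
      rw [if_neg]; intro hc
      have := hc i (by omega)
      rw [Function.update_self] at this
      exact ha this.symm
    · simp
  · rw [if_neg hw]
    apply Finset.sum_eq_zero; intro a _
    rw [if_neg]; intro hc
    refine hw (fun j hj => ?_)
    have hji : (j : ℕ) ≠ (i : ℕ) := by omega
    have := hc j (by omega)
    rwa [Function.update_of_ne (fun he => hji (by rw [he]))] at this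

lemma prefProb_succ_le (hP : ∀ w, 0 ≤ P w) (i : Fin n) (z : Fin n → Z) (a : Z) :
    prefProb P ((i : ℕ) + 1) (Function.update z i a) ≤ prefProb P i z := by
  rw [← prefProb_succ_sum i z]
  exact Finset.single_le_sum (f := fun a => prefProb P ((i:ℕ)+1) (Function.update z i a))
    (fun b _ => prefProb_nonneg hP _ _) (Finset.mem_univ a)

lemma condProb_nonneg (hP : ∀ w, 0 ≤ P w) (i : Fin n) (z : Fin n → Z) (a : Z) :
    0 ≤ condProb P i z a :=
  div_nonneg (prefProb_nonneg hP _ _) (prefProb_nonneg hP _ _)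

lemma condProb_le_one (hP : ∀ w, 0 ≤ P w) (i : Fin n) (z : Fin n → Z) (a : Z) :
    condProb P i z a ≤ 1 := by
  unfold condProb
  rcases eq_or_lt_of_le (prefProb_nonneg hP (i : ℕ) z) with hz | hz
  · rw [← hz]; simp
  · exact div_le_one_of_le₀ (prefProb_succ_le hP i z a) hz.le

lemma condProb_mul (hP : ∀ w, 0 ≤ P w) (i : Fin n) (z : Fin n → Z) (a : Z) :
    condProb P i z a * prefProb P i z = prefProb P ((i : ℕ) + 1) (Function.update z i a) := by
  unfold condProb
  rcases eq_or_lt_of_le (prefProb_nonneg hP (i : ℕ) z) with hz | hz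
  · rw [← hz, mul_zero]
    have h1 := prefProb_succ_le hP i z a
    rw [← hz] at h1
    exact (le_antisymm h1 (prefProb_nonneg hP _ _)).symm
  · field_simp

lemma condProb_sum (hP : ∀ w, 0 ≤ P w) (i : Fin n) (z : Fin n → Z)
    (hz : 0 < prefProb P i z) : ∑ a : Z, condProb P i z a = 1 := by
  unfold condProb
  rw [← Finset.sum_div, prefProb_succ_sum i z, div_self hz.ne']

lemma condProb_congr (i : Fin n) {z₁ z₂ : Fin n → Z}
    (hz : ∀ j : Fin n, (j : ℕ) < (i : ℕ) → z₁ j = z₂ j) (a : Z) :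
    condProb P i z₁ a = condProb P i z₂ a := by
  unfold condProb
  rw [prefProb_congr hz, prefProb_congr (z₂ := Function.update z₂ i a)]
  intro j hj
  rcases eq_or_ne j i with rfl | hne
  · simp
  · rw [Function.update_of_ne hne, Function.update_of_ne hne]
    exact hz j (by have : (j:ℕ) ≠ (i:ℕ) := fun hv => hne (Fin.ext hv); omega)

lemma prod_condProb (hP : ∀ w, 0 ≤ P w) (hPsum : ∑ w, P w = 1) (w : Fin n → Z)
    (hw : 0 < P w) : ∏ j : Fin n, condProb P j w (w j) = P w := by
  have hpos : ∀ i : ℕ, 0 < prefProb P i w := fun i => lt_of_lt_of_le hw (self_le_prefProb hP i w)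
  have hcp : ∀ j : Fin n, condProb P j w (w j) =
      prefProb P ((j : ℕ) + 1) w / prefProb P (j : ℕ) w := by
    intro j; unfold condProb; rw [Function.update_eq_self]
  rw [Finset.prod_congr rfl (fun j _ => hcp j)]
  have key : ∀ k : ℕ, k ≤ n →
      ∏ j ∈ Finset.univ.filter (fun j : Fin n => (j : ℕ) < k),
        (prefProb P ((j : ℕ) + 1) w / prefProb P (j : ℕ) w) = prefProb P k w / prefProb P 0 w := by
    intro k
    induction k with
    | zero => intro _; simp [div_self (hpos 0).ne']
    | succ m ih =>
      intro hm
      have hfil : Finset.univ.filter (fun j : Fin n => (j : ℕ) < m + 1) =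
          insert (⟨m, by omega⟩ : Fin n) (Finset.univ.filter (fun j : Fin n => (j : ℕ) < m)) := by
        ext j
        simp only [Finset.mem_insert, Finset.mem_filter, Finset.mem_univ, true_and]
        constructor
        · intro hj
          rcases Nat.lt_or_ge (j : ℕ) m with h1 | h1
          · exact Or.inr h1
          · exact Or.inl (Fin.ext (by simp only [Fin.val_mk]; omega))
        · rintro (rfl | hj)
          · simp
          · omega
      rw [hfil, Finset.prod_insert (by simp), ih (by omega)]
      have h0 := (hpos 0).ne'
      have hmpos := (hpos m).ne'
      field_simp
  have := key n le_rfl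
  rw [prefProb_last, prefProb_zero, hPsum, div_one] at this
  rw [← this]
  apply Finset.prod_congr
  · ext j; simp [j.isLt]
  · intros; rfl

/-- Quadratic upper bound on `exp` of a small nonpositive argument. -/
lemma exp_neg_quad_bound {u : ℝ} (h0 : 0 ≤ u) (h1 : u ≤ 1) :
    Real.exp (-u) ≤ 1 - u + (3/4) * u ^ 2 := by
  have hb := Real.exp_bound (x := -u) (by rw [abs_neg, abs_of_nonneg h0]; exact h1)
    (n := 2) (by norm_num)
  rw [abs_neg, abs_of_nonneg h0] at hb
  have h2 : ∑ m ∈ Finset.range 2, (-u) ^ m / (m.factorial : ℝ) = 1 - u := by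
    simp [Finset.sum_range_succ]; ring
  rw [h2] at hb
  have h3 : (u : ℝ) ^ 2 * ((2 : ℕ).succ / ((2 : ℕ).factorial * (2 : ℕ))) = (3/4) * u ^ 2 := by
    norm_num [Nat.factorial]; ring
  rw [h3] at hb
  linarith [(abs_sub_le_iff.mp hb).1]

/-- Chord bound for the convex function `exp (-(s x))` on `[0, M]`. -/
lemma exp_chord_bound {s M t : ℝ} (hM : 0 < M) (ht0 : 0 ≤ t) (htM : t ≤ M) :
    Real.exp (-(s * t)) ≤ 1 - (1 - Real.exp (-(s * M))) * (t / M) := by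
  have ha : 0 ≤ 1 - t / M := by
    rw [sub_nonneg, div_le_one hM]; exact htM
  have hb : 0 ≤ t / M := div_nonneg ht0 hM.le
  have hab : (1 - t / M) + t / M = 1 := by ring
  have hcx := convexOn_exp.2 (Set.mem_univ (0 : ℝ)) (Set.mem_univ (-(s * M))) ha hb hab
  simp only [smul_eq_mul, mul_zero, zero_add, Real.exp_zero, mul_one] at hcx
  have harg : (1 - t / M) * 0 + t / M * (-(s * M)) = -(s * t) := by
    field_simp
    ring
  calc Real.exp (-(s * t)) = Real.exp ((1 - t / M) * 0 + t / M * (-(s * M))) := by rw [harg]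
    _ ≤ (1 - t / M) * Real.exp 0 + t / M * Real.exp (-(s * M)) := convexOn_exp.2
        (Set.mem_univ _) (Set.mem_univ _) ha hb hab
    _ = 1 - (1 - Real.exp (-(s * M))) * (t / M) := by rw [Real.exp_zero]; ring

/-- MGF bound for a `[0,M]`-valued random variable on a finite space. -/
lemma mgf_bound {M s : ℝ} (q T : Z → ℝ) (hq0 : ∀ a, 0 ≤ q a) (hqs : ∑ a, q a = 1)
    (hT0 : ∀ a, 0 ≤ T a) (hTM : ∀ a, T a ≤ M) (hM : 0 < M) (hs : 0 < s) (hsM : s * M ≤ 1) :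
    ∑ a, q a * Real.exp (-(s * T a)) ≤
      Real.exp (-(s * (∑ a, q a * T a)) + (3/4) * s ^ 2 * M ^ 2) := by
  set μ := ∑ a, q a * T a with hμ
  have hμ0 : 0 ≤ μ := Finset.sum_nonneg fun a _ => mul_nonneg (hq0 a) (hT0 a)
  have hμM : μ ≤ M := by
    calc μ ≤ ∑ a, q a * M := Finset.sum_le_sum fun a _ => mul_le_mul_of_nonneg_left (hTM a) (hq0 a)
    _ = M := by rw [← Finset.sum_mul, hqs, one_mul]
  have step1 : ∑ a, q a * Real.exp (-(s * T a)) ≤ 1 - (1 - Real.exp (-(s * M))) * (μ / M) := by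
    have : ∑ a, q a * Real.exp (-(s * T a)) ≤
        ∑ a, q a * (1 - (1 - Real.exp (-(s * M))) * (T a / M)) :=
      Finset.sum_le_sum fun a _ => mul_le_mul_of_nonneg_left
        (exp_chord_bound hM (hT0 a) (hTM a)) (hq0 a)
    refine this.trans (le_of_eq ?_)
    have hterm : ∀ a : Z, q a * (1 - (1 - Real.exp (-(s * M))) * (T a / M)) =
        q a - (1 - Real.exp (-(s * M))) / M * (q a * T a) := by
      intro a; ring
    rw [Finset.sum_congr rfl (fun a _ => hterm a), Finset.sum_sub_distrib, hqs,
      ← Finset.mul_sum, ← hμ]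
    ring
  have step2 : 1 - (1 - Real.exp (-(s * M))) * (μ / M) ≤
      Real.exp (-((1 - Real.exp (-(s * M))) * (μ / M))) := by
    have := Real.add_one_le_exp (-((1 - Real.exp (-(s * M))) * (μ / M)))
    linarith
  have step3 : -((1 - Real.exp (-(s * M))) * (μ / M)) ≤ -(s * μ) + (3/4) * s ^ 2 * M ^ 2 := by
    have hquad : Real.exp (-(s * M)) ≤ 1 - s * M + (3/4) * (s * M) ^ 2 :=
      exp_neg_quad_bound (mul_nonneg hs.le hM.le) hsM
    have hlow : s * M - (3/4) * (s * M) ^ 2 ≤ 1 - Real.exp (-(s * M)) := by linarith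
    have hmul : (s * M - (3/4) * (s * M) ^ 2) * (μ / M) ≤
        (1 - Real.exp (-(s * M))) * (μ / M) :=
      mul_le_mul_of_nonneg_right hlow (div_nonneg hμ0 hM.le)
    have heq : (s * M - (3/4) * (s * M) ^ 2) * (μ / M) = s * μ - (3/4) * s ^ 2 * M * μ := by
      field_simp
    have hfin : (3/4) * s ^ 2 * M * μ ≤ (3/4) * s ^ 2 * M ^ 2 := by
      have : (0:ℝ) ≤ (3/4) * s ^ 2 * M := by positivity
      nlinarith
    linarith [hmul, heq ▸ hmul]
  calc ∑ a, q a * Real.exp (-(s * T a)) ≤ 1 - (1 - Real.exp (-(s * M))) * (μ / M) := step1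
    _ ≤ Real.exp (-((1 - Real.exp (-(s * M))) * (μ / M))) := step2
    _ ≤ Real.exp (-(s * μ) + (3/4) * s ^ 2 * M ^ 2) := Real.exp_le_exp.mpr step3

lemma trunc_pointwise {p M : ℝ} (hp0 : 0 ≤ p) (hp1 : p ≤ 1) (hM : 0 ≤ M) :
    p * (-(Real.logb 2 p)) ≤ p * min (-(Real.logb 2 p)) M + (2:ℝ) ^ (-M) / Real.log 2 := by
  have hlog2 : 0 < Real.log 2 := Real.log_pos one_lt_two
  have hc : (0:ℝ) < (2:ℝ) ^ (-M) := Real.rpow_pos_of_pos two_pos _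
  rcases le_or_gt (-(Real.logb 2 p)) M with hcase | hcase
  · rw [min_eq_left hcase]
    have : (0:ℝ) < (2:ℝ) ^ (-M) / Real.log 2 := by positivity
    linarith
  · rw [min_eq_right hcase.le]
    have hppos : 0 < p := by
      rcases eq_or_lt_of_le hp0 with rfl | hp
      · simp [Real.logb_zero] at hcase; linarith
      · exact hp
    have hkey : -(Real.logb 2 p) - M = Real.log ((2:ℝ) ^ (-M) / p) / Real.log 2 := by
      rw [Real.log_div hc.ne' hppos.ne', Real.log_rpow two_pos, Real.logb]
      field_simp
      ring
    have hlogle : Real.log ((2:ℝ) ^ (-M) / p) ≤ (2:ℝ) ^ (-M) / p := by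
      have := Real.log_le_sub_one_of_pos (x := (2:ℝ) ^ (-M) / p) (by positivity)
      linarith
    have h2 : p * (-(Real.logb 2 p) - M) ≤ (2:ℝ) ^ (-M) / Real.log 2 := by
      rw [hkey]
      calc p * (Real.log ((2:ℝ) ^ (-M) / p) / Real.log 2)
          ≤ p * (((2:ℝ) ^ (-M) / p) / Real.log 2) := by
            apply mul_le_mul_of_nonneg_left _ hp0
            gcongr
        _ = (2:ℝ) ^ (-M) / Real.log 2 := by field_simp
    linarith [h2, mul_sub p (-(Real.logb 2 p)) M]

lemma trunc_loss (p : Z → ℝ) (hp0 : ∀ a, 0 ≤ p a) (hp1 : ∀ a, p a ≤ 1) {M : ℝ} (hM : 0 ≤ M) :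
    ∑ a, p a * (-(Real.logb 2 (p a))) - (Fintype.card Z) * (2:ℝ) ^ (-M) / Real.log 2
      ≤ ∑ a, p a * min (-(Real.logb 2 (p a))) M := by
  have hpt : ∀ a : Z, p a * (-(Real.logb 2 (p a))) ≤
      p a * min (-(Real.logb 2 (p a))) M + (2:ℝ) ^ (-M) / Real.log 2 :=
    fun a => trunc_pointwise (hp0 a) (hp1 a) hM
  have := Finset.sum_le_sum (fun a (_ : a ∈ Finset.univ) => hpt a)
  rw [Finset.sum_add_distrib, Finset.sum_const, Finset.card_univ, nsmul_eq_mul] at this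
  have hrw : (Fintype.card Z : ℝ) * ((2:ℝ) ^ (-M) / Real.log 2) =
      (Fintype.card Z) * (2:ℝ) ^ (-M) / Real.log 2 := by ring
  linarith [this, hrw ▸ this]


lemma cond_step (hP : ∀ w, 0 ≤ P w) (h : ℝ) {M s : ℝ} (hM : 1 ≤ M) (hs : 0 < s)
    (hsM : s * M ≤ 1) {i : Fin n} {z : Fin n → Z} (hz : 0 < prefProb P i z)
    (hent : h ≤ condEnt P i z) :
    ∑ a, condProb P i z a * Real.exp (-(s * min (-(Real.logb 2 (condProb P i z a))) M)) ≤
      Real.exp (-(s * (h - (Fintype.card Z) * (2:ℝ) ^ (-M) / Real.log 2))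
        + (3/4) * s ^ 2 * M ^ 2) := by
  set p : Z → ℝ := fun a => condProb P i z a with hp
  have hp0 : ∀ a, 0 ≤ p a := fun a => condProb_nonneg hP i z a
  have hp1 : ∀ a, p a ≤ 1 := fun a => condProb_le_one hP i z a
  have hps : ∑ a, p a = 1 := condProb_sum hP i z hz
  set T : Z → ℝ := fun a => min (-(Real.logb 2 (p a))) M with hT
  have hT0 : ∀ a, 0 ≤ T a := by
    intro a
    apply le_min _ (by linarith)
    simpa using (Real.logb_nonpos one_lt_two (hp0 a) (hp1 a))
  have hTM : ∀ a, T a ≤ M := fun a => min_le_right _ _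
  have hmgf := mgf_bound p T hp0 hps hT0 hTM (by linarith) hs hsM
  refine hmgf.trans (Real.exp_le_exp.mpr ?_)
  have hμ : h - (Fintype.card Z) * (2:ℝ) ^ (-M) / Real.log 2 ≤ ∑ a, p a * T a := by
    have hloss := trunc_loss p hp0 hp1 (by linarith : (0:ℝ) ≤ M)
    have hentEq : condEnt P i z = ∑ a, p a * (-(Real.logb 2 (p a))) := by
      unfold condEnt
      rw [← Finset.sum_neg_distrib]
      apply Finset.sum_congr rfl
      intro a _; ring
    rw [hentEq] at hent
    linarith
  have := mul_le_mul_of_nonneg_left hμ hs.le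
  linarith

lemma main_induction (hP : ∀ w, 0 ≤ P w) {M s K : ℝ} (hK : 0 ≤ K)
    (hstep : ∀ (i : Fin n) (z : Fin n → Z), 0 < prefProb P i z →
      ∑ a, condProb P i z a * Real.exp (-(s * min (-(Real.logb 2 (condProb P i z a))) M)) ≤ K) :
    ∀ (d i : ℕ), i + d = n → ∀ z : Fin n → Z,
      (∑ w, if (∀ j : Fin n, (j : ℕ) < i → w j = z j) then
          P w * ∏ j ∈ Finset.univ.filter (fun j : Fin n => i ≤ (j : ℕ)),
            Real.exp (-(s * min (-(Real.logb 2 (condProb P j w (w j)))) M)) else 0)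
        ≤ prefProb P i z * K ^ d := by
  intro d
  induction d with
  | zero =>
    intro i hi z
    have hfil : Finset.univ.filter (fun j : Fin n => i ≤ (j : ℕ)) = ∅ := by
      ext j
      simp only [Finset.mem_filter, Finset.mem_univ, true_and, Finset.notMem_empty, iff_false,
        not_le]
      have := j.isLt
      omega
    rw [hfil]
    simp only [Finset.prod_empty, mul_one, pow_zero]
    exact le_of_eq rfl
  | succ d ih =>
    intro i hi z
    have hin : i < n := by omega
    set ii : Fin n := ⟨i, hin⟩ with hii
    set Y : (Fin n → Z) → Fin n → ℝ := fun w j =>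
      Real.exp (-(s * min (-(Real.logb 2 (condProb P j w (w j)))) M)) with hY
    set Y' : Z → ℝ := fun a =>
      Real.exp (-(s * min (-(Real.logb 2 (condProb P ii z a))) M)) with hY'
    have hY'0 : ∀ a, 0 ≤ Y' a := fun a => (Real.exp_pos _).le
    have hfil : Finset.univ.filter (fun j : Fin n => i ≤ (j : ℕ)) =
        insert ii (Finset.univ.filter (fun j : Fin n => i + 1 ≤ (j : ℕ))) := by
      ext j
      simp only [Finset.mem_insert, Finset.mem_filter, Finset.mem_univ, true_and]
      constructor
      · intro hj
        rcases Nat.lt_or_ge (i : ℕ) (j : ℕ) with h1 | h1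
        · exact Or.inr (by omega)
        · exact Or.inl (Fin.ext (by simp only [hii, Fin.val_mk]; omega))
      · rintro (rfl | hj)
        · simp [hii]
        · omega
    -- per-w identity
    have hper : ∀ w : Fin n → Z,
        (if (∀ j : Fin n, (j : ℕ) < i → w j = z j) then P w *
            ∏ j ∈ Finset.univ.filter (fun j : Fin n => i ≤ (j : ℕ)), Y w j else 0) =
        ∑ a : Z, Y' a * (if (∀ j : Fin n, (j : ℕ) < i + 1 → w j = Function.update z ii a j)
          then P w * ∏ j ∈ Finset.univ.filter (fun j : Fin n => i + 1 ≤ (j : ℕ)), Y w j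
          else 0) := by
      intro w
      by_cases hw : ∀ j : Fin n, (j : ℕ) < i → w j = z j
      · rw [if_pos hw, Finset.sum_eq_single (w ii)]
        · rw [if_pos, hfil, Finset.prod_insert (by simp [hii])]
          · have hcc : condProb P ii w (w ii) = condProb P ii z (w ii) :=
              condProb_congr ii (fun j hj => hw j (by simpa [hii] using hj)) (w ii)
            rw [hY, hY']
            dsimp only
            rw [hcc]
            ring
          · intro j hj
            rcases eq_or_ne j ii with rfl | hne
            · simp
            · rw [Function.update_of_ne hne]
              have : (j : ℕ) ≠ i := fun hv => hne (Fin.ext (by simp [hii, hv]))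
              exact hw j (by omega)
        · intro a _ ha
          rw [if_neg, mul_zero]
          intro hc
          have := hc ii (by simp [hii])
          rw [Function.update_self] at this
          exact ha this.symm
        · intro hni; exact absurd (Finset.mem_univ (w ii)) hni
      · rw [if_neg hw]
        symm
        apply Finset.sum_eq_zero
        intro a _
        rw [if_neg, mul_zero]
        intro hc
        refine hw (fun j hj => ?_)
        have hji : (j : ℕ) ≠ i := by omega
        have := hc j (by omega)
        rwa [Function.update_of_ne (fun he => hji (by simp [he, hii]))] at this
    calc (∑ w, if (∀ j : Fin n, (j : ℕ) < i → w j = z j) then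
            P w * ∏ j ∈ Finset.univ.filter (fun j : Fin n => i ≤ (j : ℕ)), Y w j else 0)
        = ∑ a : Z, Y' a * (∑ w, if (∀ j : Fin n, (j : ℕ) < i + 1 →
            w j = Function.update z ii a j) then
            P w * ∏ j ∈ Finset.univ.filter (fun j : Fin n => i + 1 ≤ (j : ℕ)), Y w j else 0) := by
          rw [Finset.sum_congr rfl (fun w _ => hper w), Finset.sum_comm]
          apply Finset.sum_congr rfl
          intro a _
          rw [Finset.mul_sum]
      _ ≤ ∑ a : Z, Y' a * (prefProb P (i + 1) (Function.update z ii a) * K ^ d) := by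
          apply Finset.sum_le_sum
          intro a _
          exact mul_le_mul_of_nonneg_left (ih (i + 1) (by omega) (Function.update z ii a))
            (hY'0 a)
      _ = (∑ a : Z, Y' a * condProb P ii z a) * prefProb P ii z * K ^ d := by
          rw [Finset.sum_mul, Finset.sum_mul]
          apply Finset.sum_congr rfl
          intro a _
          have := condProb_mul hP ii z a
          simp only [hii, Fin.val_mk] at this ⊢
          rw [← this]
          ring
      _ ≤ prefProb P i z * K ^ (d + 1) := by
          rcases eq_or_lt_of_le (prefProb_nonneg hP i z) with hz | hz
          · rw [show prefProb P (ii : ℕ) z = prefProb P i z from rfl, ← hz]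
            simp
          · have hstep' := hstep ii z (by simpa [hii] using hz)
            have hsum : (∑ a : Z, Y' a * condProb P ii z a) ≤ K := by
              refine le_trans (le_of_eq ?_) hstep'
              apply Finset.sum_congr rfl
              intro a _
              rw [hY']
              ring
            have hnn : 0 ≤ prefProb P ii z * K ^ d :=
              mul_nonneg (prefProb_nonneg hP _ _) (pow_nonneg hK d)
            calc (∑ a : Z, Y' a * condProb P ii z a) * prefProb P ii z * K ^ d
                = (∑ a : Z, Y' a * condProb P ii z a) * (prefProb P ii z * K ^ d) := by ring
              _ ≤ K * (prefProb P ii z * K ^ d) := mul_le_mul_of_nonneg_right hsum hnn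
              _ = prefProb P i z * K ^ (d + 1) := by
                  rw [show prefProb P (ii : ℕ) z = prefProb P i z from rfl]
                  ring

lemma sum_X_le (hP : ∀ w, 0 ≤ P w) (hPsum : ∑ w, P w = 1) {M : ℝ} (w : Fin n → Z)
    (hw : 0 < P w) :
    ∑ j : Fin n, min (-(Real.logb 2 (condProb P j w (w j)))) M ≤ -(Real.logb 2 (P w)) := by
  have hprod := prod_condProb hP hPsum w hw
  have hne : ∀ j : Fin n, condProb P j w (w j) ≠ 0 := by
    intro j hj
    rw [Finset.prod_eq_zero (Finset.mem_univ j) hj] at hprod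
    exact hw.ne hprod
  have hlog : Real.logb 2 (P w) = ∑ j : Fin n, Real.logb 2 (condProb P j w (w j)) := by
    rw [← hprod]
    unfold Real.logb
    rw [Real.log_prod (fun j _ => hne j), Finset.sum_div]
  rw [hlog, ← Finset.sum_neg_distrib]
  exact Finset.sum_le_sum fun j _ => min_le_left _ _



theorem azuma_smooth_min_entropy (n : ℕ) (P : (Fin n → Z) → ℝ)
    (hP : ∀ w, 0 ≤ P w) (hPsum : ∑ w, P w = 1) (h : ℝ) (hh : 0 ≤ h)
    (hcond : ∀ (i : Fin n) (z : Fin n → Z), 0 < prefProb P i z → h ≤ condEnt P i z)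
    (lam : ℝ) (hlam0 : 0 < lam) (hlam : lam < 1/2) :
    ∃ P' : (Fin n → Z) → ℝ, IsSubDist P' ∧
      GTD P' P ≤ Real.exp (-(lam ^ 2 * n) /
        (32 * (Real.logb 2 ((Fintype.card Z : ℝ) / lam)) ^ 2)) ∧
      ∀ w, P' w ≤ (2 : ℝ) ^ (-((h - 2 * lam) * n)) := by
  -- setup
  set N : ℝ := (Fintype.card Z : ℝ) with hN
  have hN1 : (1:ℝ) ≤ N := by
    rw [hN]; exact_mod_cast Fintype.card_pos
  have hNlam : (2:ℝ) ≤ N / lam := by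
    have h2 : (2:ℝ) ≤ 1 / lam := by
      rw [le_div_iff₀ hlam0]; linarith
    calc (2:ℝ) ≤ 1 / lam := h2
      _ ≤ N / lam := by gcongr
  set M : ℝ := Real.logb 2 (N / lam) with hM
  have hM1 : (1:ℝ) ≤ M := by
    rw [hM, show (1:ℝ) = Real.logb 2 2 from (Real.logb_self_eq_one one_lt_two).symm]
    exact Real.logb_le_logb_of_le one_lt_two two_pos hNlam
  have hM0 : (0:ℝ) < M := lt_of_lt_of_le one_pos hM1
  have hMpow : (2:ℝ) ^ (-M) = lam / N := by
    rw [hM, Real.rpow_neg (by norm_num : (0:ℝ) ≤ 2),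
      Real.rpow_logb two_pos (by norm_num) (by positivity)]
    rw [inv_div]
  have hL : (0:ℝ) < Real.log 2 := Real.log_pos one_lt_two
  have hloss : N * (2:ℝ) ^ (-M) / Real.log 2 = lam / Real.log 2 := by
    rw [hMpow]
    field_simp
  set s : ℝ := lam / (2 * M ^ 2) with hs
  have hs0 : 0 < s := by positivity
  have hsM : s * M ≤ 1 := by
    rw [hs]
    rw [div_mul_eq_mul_div, div_le_one (by positivity)]
    nlinarith
  set K : ℝ := Real.exp (-(s * (h - lam / Real.log 2)) + (3/4) * s ^ 2 * M ^ 2) with hK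
  have hstep : ∀ (i : Fin n) (z : Fin n → Z), 0 < prefProb P i z →
      ∑ a, condProb P i z a * Real.exp (-(s * min (-(Real.logb 2 (condProb P i z a))) M)) ≤ K := by
    intro i z hz
    have := cond_step hP h hM1 hs0 hsM hz (hcond i z hz)
    rwa [hloss] at this
  -- the overall expectation bound
  obtain ⟨z₀⟩ : Nonempty (Fin n → Z) := inferInstance
  have hInd := main_induction hP (le_of_lt (Real.exp_pos _)) hstep n 0 (zero_add n) z₀
  have hfil0 : Finset.univ.filter (fun j : Fin n => 0 ≤ (j : ℕ)) = Finset.univ := by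
    apply Finset.filter_true_of_mem; intro j _; omega
  have hExp : ∑ w, P w * ∏ j : Fin n,
      Real.exp (-(s * min (-(Real.logb 2 (condProb P j w (w j)))) M)) ≤ K ^ n := by
    have h0 : prefProb P 0 z₀ = 1 := by rw [prefProb_zero, hPsum]
    calc ∑ w, P w * ∏ j : Fin n,
          Real.exp (-(s * min (-(Real.logb 2 (condProb P j w (w j)))) M))
        = ∑ w, if (∀ j : Fin n, (j : ℕ) < 0 → w j = z₀ j) then
            P w * ∏ j ∈ Finset.univ.filter (fun j : Fin n => 0 ≤ (j : ℕ)),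
              Real.exp (-(s * min (-(Real.logb 2 (condProb P j w (w j)))) M)) else 0 := by
          apply Finset.sum_congr rfl
          intro w _
          rw [if_pos (fun j hj => absurd hj (Nat.not_lt_zero _)), hfil0]
      _ ≤ prefProb P 0 z₀ * K ^ n := hInd
      _ = K ^ n := by rw [h0, one_mul]
  -- definitions of the smoothed distribution
  set θ : ℝ := (2 : ℝ) ^ (-((h - 2 * lam) * n)) with hθ
  have hθ0 : 0 < θ := Real.rpow_pos_of_pos two_pos _
  set P' : (Fin n → Z) → ℝ := fun w => if P w ≤ θ then P w else 0 with hP'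
  set S : ℝ := ∑ w, if P w ≤ θ then 0 else P w with hS
  have hS0 : 0 ≤ S := Finset.sum_nonneg fun w _ => by
    by_cases hw : P w ≤ θ
    · rw [if_pos hw]
    · rw [if_neg hw]; exact hP w
  -- Markov step
  have hMarkov : S ≤ Real.exp (s * ((h - 2 * lam) * n)) * K ^ n := by
    have hpt : ∀ w : Fin n → Z, (if P w ≤ θ then 0 else P w) ≤
        Real.exp (s * ((h - 2 * lam) * n)) *
          (P w * ∏ j : Fin n,
            Real.exp (-(s * min (-(Real.logb 2 (condProb P j w (w j)))) M))) := by
      intro w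
      by_cases hw : P w ≤ θ
      · rw [if_pos hw]
        apply mul_nonneg (Real.exp_pos _).le
        exact mul_nonneg (hP w) (Finset.prod_nonneg fun j _ => (Real.exp_pos _).le)
      · rw [if_neg hw]
        push_neg at hw
        have hPw0 : 0 < P w := lt_trans hθ0 hw
        have hXle : ∑ j : Fin n, min (-(Real.logb 2 (condProb P j w (w j)))) M ≤
            (h - 2 * lam) * n := by
          have h1 : Real.logb 2 θ < Real.logb 2 (P w) := Real.logb_lt_logb one_lt_two hθ0 hw
          rw [hθ, Real.logb_rpow two_pos (by norm_num : (2:ℝ) ≠ 1)] at h1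
          have := sum_X_le hP hPsum (M := M) w hPw0
          linarith
        have hprod : ∏ j : Fin n,
            Real.exp (-(s * min (-(Real.logb 2 (condProb P j w (w j)))) M)) =
            Real.exp (-(s * ∑ j : Fin n, min (-(Real.logb 2 (condProb P j w (w j)))) M)) := by
          rw [← Real.exp_sum]
          congr 1
          rw [Finset.mul_sum, Finset.sum_neg_distrib]
        rw [hprod]
        have hge : (1:ℝ) ≤ Real.exp (s * ((h - 2 * lam) * n) +
            -(s * ∑ j : Fin n, min (-(Real.logb 2 (condProb P j w (w j)))) M)) := by
          rw [show (1:ℝ) = Real.exp 0 from (Real.exp_zero).symm]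
          apply Real.exp_le_exp.mpr
          have := mul_le_mul_of_nonneg_left hXle hs0.le
          linarith
        calc P w = P w * 1 := (mul_one _).symm
          _ ≤ P w * Real.exp (s * ((h - 2 * lam) * n) +
              -(s * ∑ j : Fin n, min (-(Real.logb 2 (condProb P j w (w j)))) M)) :=
            mul_le_mul_of_nonneg_left hge (hP w)
          _ = Real.exp (s * ((h - 2 * lam) * n)) *
              (P w * Real.exp (-(s * ∑ j : Fin n,
                min (-(Real.logb 2 (condProb P j w (w j)))) M))) := by
              rw [Real.exp_add]; ring
    calc S ≤ ∑ w, Real.exp (s * ((h - 2 * lam) * n)) *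
          (P w * ∏ j : Fin n,
            Real.exp (-(s * min (-(Real.logb 2 (condProb P j w (w j)))) M))) :=
        Finset.sum_le_sum fun w _ => hpt w
      _ = Real.exp (s * ((h - 2 * lam) * n)) * ∑ w, P w * ∏ j : Fin n,
            Real.exp (-(s * min (-(Real.logb 2 (condProb P j w (w j)))) M)) := by
          rw [Finset.mul_sum]
      _ ≤ Real.exp (s * ((h - 2 * lam) * n)) * K ^ n :=
        mul_le_mul_of_nonneg_left hExp (Real.exp_pos _).le
  -- final numeric bound
  have hfinal : Real.exp (s * ((h - 2 * lam) * n)) * K ^ n ≤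
      Real.exp (-(lam ^ 2 * n) / (32 * M ^ 2)) := by
    rw [hK, ← Real.exp_nat_mul, ← Real.exp_add]
    apply Real.exp_le_exp.mpr
    set L : ℝ := Real.log 2 with hLdef
    have hc : -2 * s * lam + s * lam / L + (3/4) * s ^ 2 * M ^ 2 ≤ -lam ^ 2 / (32 * M ^ 2) := by
      have hceq : -2 * s * lam + s * lam / L + (3/4) * s ^ 2 * M ^ 2 =
          lam ^ 2 / M ^ 2 * (-1 + 1 / (2 * L) + 3 / 16) := by
        rw [hs]; field_simp; ring
      have hLlb : (16:ℝ) / 25 ≤ L := by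
        rw [hLdef]
        have := Real.log_two_gt_d9
        linarith
      have hfrac : 1 / (2 * L) ≤ 25 / 32 := by
        rw [div_le_div_iff₀ (by linarith) (by norm_num)]
        nlinarith
      have hcoef : -1 + 1 / (2 * L) + 3 / 16 ≤ -1 / 32 := by linarith
      have := mul_le_mul_of_nonneg_left hcoef (by positivity : (0:ℝ) ≤ lam ^ 2 / M ^ 2)
      rw [hceq]
      calc lam ^ 2 / M ^ 2 * (-1 + 1 / (2 * L) + 3 / 16)
          ≤ lam ^ 2 / M ^ 2 * (-1 / 32) := this
        _ = -lam ^ 2 / (32 * M ^ 2) := by field_simp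
    have hexpand : s * ((h - 2 * lam) * n) +
        (n : ℝ) * (-(s * (h - lam / L)) + (3/4) * s ^ 2 * M ^ 2) =
        (n : ℝ) * (-2 * s * lam + s * lam / L + (3/4) * s ^ 2 * M ^ 2) := by ring
    rw [hexpand]
    calc (n : ℝ) * (-2 * s * lam + s * lam / L + (3/4) * s ^ 2 * M ^ 2)
        ≤ (n : ℝ) * (-lam ^ 2 / (32 * M ^ 2)) :=
        mul_le_mul_of_nonneg_left hc (Nat.cast_nonneg n)
      _ = -(lam ^ 2 * n) / (32 * M ^ 2) := by ring
  -- assemble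
  have hP'le : ∀ w, P' w ≤ P w := by
    intro w
    rw [hP']; dsimp only
    by_cases hw : P w ≤ θ
    · rw [if_pos hw]
    · rw [if_neg hw]; exact hP w
  refine ⟨P', ⟨fun w => ?_, ?_⟩, ?_, fun w => ?_⟩
  · rw [hP']; dsimp only
    by_cases hw : P w ≤ θ
    · rw [if_pos hw]; exact hP w
    · rw [if_neg hw]
  · calc ∑ w, P' w ≤ ∑ w, P w := Finset.sum_le_sum fun w _ => hP'le w
      _ = 1 := hPsum
  · have hGTD : GTD P' P = S := by
      unfold GTD
      have habs : ∀ w, |P' w - P w| = (if P w ≤ θ then 0 else P w) := by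
        intro w
        rw [hP']; dsimp only
        by_cases hw : P w ≤ θ
        · rw [if_pos hw, if_pos hw, sub_self, abs_zero]
        · rw [if_neg hw, if_neg hw, zero_sub, abs_neg, abs_of_nonneg (hP w)]
      have hsub : ∑ w, (P' w - P w) = -S := by
        rw [hS, ← Finset.sum_neg_distrib]
        apply Finset.sum_congr rfl
        intro w _
        rw [hP']; dsimp only
        by_cases hw : P w ≤ θ
        · rw [if_pos hw, if_pos hw, sub_self, neg_zero]
        · rw [if_neg hw, if_neg hw, zero_sub]
      rw [Finset.sum_congr rfl (fun w _ => habs w), hsub, abs_neg, abs_of_nonneg hS0, ← hS]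
      ring
    rw [hGTD]
    calc S ≤ Real.exp (s * ((h - 2 * lam) * n)) * K ^ n := hMarkov
      _ ≤ Real.exp (-(lam ^ 2 * n) / (32 * M ^ 2)) := hfinal
  · rw [hP']; dsimp only
    by_cases hw : P w ≤ θ
    · rw [if_pos hw]; exact hw
    · rw [if_neg hw]; exact hθ0.le
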